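/- Approximately dual frames have the same excess: if (f_n) and (g_n) are frames in H with analysis operators U, V satisfying ‖V*U − I‖ < 1, then dim(Ker U*) = dim(Ker V*). -/

import Mathlib

open scoped InnerProductSpace

noncomputable section

abbrev ell2 : Type := lp (fun _ : ℕ => ℂ) 2

def IsFrame {H : Type*} [NormedAddCommGroup H] [InnerProductSpace ℂ H]
    (f : ℕ → H) : Prop :=
  ∃ A B : ℝ, 0 < A ∧ 0 < B ∧ ∀ x : H,
    A * ‖x‖ ^ 2 ≤ ∑' n, ‖⟪x, f n⟫_ℂ‖ ^ 2 ∧ ∑' n, ‖⟪x, f n⟫_ℂ‖ ^ 2 ≤ B * ‖x‖ ^ 2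

def IsAnalysisOp {H : Type*} [NormedAddCommGroup H] [InnerProductSpace ℂ H]
    (f : ℕ → H) (U : H →L[ℂ] ell2) : Prop :=
  ∀ (x : H) (n : ℕ), (U x : ∀ _ : ℕ, ℂ) n = ⟪x, f n⟫_ℂ

/-- The range of the analysis operator of a frame is closed. -/
lemma frame_range_closed {H : Type*} [NormedAddCommGroup H] [InnerProductSpace ℂ H]
    [CompleteSpace H] (f : ℕ → H) (hf : IsFrame f) (U : H →L[ℂ] ell2)
    (hU : IsAnalysisOp f U) : IsClosed (Set.range U) := by
  obtain ⟨A, B, hA, hB, hfr⟩ := hf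
  have hnorm : ∀ x : H, ‖U x‖ ^ 2 = ∑' n, ‖⟪x, f n⟫_ℂ‖ ^ 2 := by
    intro x
    have h2 : (0:ℝ) < (2 : ENNReal).toReal := by norm_num
    have := lp.norm_rpow_eq_tsum h2 (U x)
    simp only [ENNReal.toReal_ofNat] at this
    calc ‖U x‖ ^ 2 = ‖U x‖ ^ (2:ℝ) := by rw [← Real.rpow_natCast]; norm_num
    _ = ∑' n, ‖(U x : ∀ _ : ℕ, ℂ) n‖ ^ (2:ℝ) := this
    _ = ∑' n, ‖⟪x, f n⟫_ℂ‖ ^ 2 := by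
        congr 1; funext n; rw [hU x n, ← Real.rpow_natCast]; norm_num
  have hlow : ∀ x : H, Real.sqrt A * ‖x‖ ≤ ‖U x‖ := by
    intro x
    have h1 : (Real.sqrt A * ‖x‖) ^ 2 ≤ ‖U x‖ ^ 2 := by
      rw [mul_pow, Real.sq_sqrt hA.le, hnorm x]; exact (hfr x).1
    have := Real.sqrt_le_sqrt h1
    rwa [Real.sqrt_sq (by positivity), Real.sqrt_sq (norm_nonneg _)] at this
  have hsA : (0:ℝ) < Real.sqrt A := Real.sqrt_pos.2 hA
  have hbound : ∀ x : H, ‖x‖ ≤ ((⟨(Real.sqrt A)⁻¹, by positivity⟩ : NNReal) : ℝ) * ‖U x‖ := by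
    intro x
    show ‖x‖ ≤ (Real.sqrt A)⁻¹ * ‖U x‖
    exact (le_inv_mul_iff₀ hsA).2 (hlow x)
  have hal := U.antilipschitz_of_bound hbound
  exact hal.isClosed_range U.uniformContinuous

set_option maxHeartbeats 1000000 in
set_option synthInstance.maxHeartbeats 400000 in
theorem approx_dual_frames_same_excess
    {H : Type*} [NormedAddCommGroup H] [InnerProductSpace ℂ H] [CompleteSpace H]
    (f g : ℕ → H) (hf : IsFrame f) (hg : IsFrame g)
    (U V : H →L[ℂ] ell2) (hU : IsAnalysisOp f U) (hV : IsAnalysisOp g V)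
    (had : ‖(ContinuousLinearMap.adjoint V) ∘L U - ContinuousLinearMap.id ℂ H‖ < 1) :
    Module.rank ℂ (LinearMap.ker (ContinuousLinearMap.adjoint U : ell2 →ₗ[ℂ] H)) =
      Module.rank ℂ (LinearMap.ker (ContinuousLinearMap.adjoint V : ell2 →ₗ[ℂ] H)) := by
  classical
  set Uad := ContinuousLinearMap.adjoint U with hUad
  set Vad := ContinuousLinearMap.adjoint V with hVad
  set T : H →L[ℂ] H := Vad ∘L U with hT
  -- T is invertible
  have hT1 : ‖(1 : H →L[ℂ] H) - T‖ < 1 := by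
    rw [norm_sub_rev]
    simpa [hT, ContinuousLinearMap.one_def] using had
  let u : (H →L[ℂ] H)ˣ := Units.oneSub (1 - T) hT1
  have huval : (u : H →L[ℂ] H) = T := by
    simp [u, Units.val_oneSub, sub_sub_cancel]
  set S : H →L[ℂ] H := ((u⁻¹ : (H →L[ℂ] H)ˣ) : H →L[ℂ] H) with hS
  have hST : S ∘L T = 1 := by
    rw [← huval]; exact u.inv_mul
  have hTS : T ∘L S = 1 := by
    rw [← huval]; exact u.mul_inv
  -- the idempotent P
  set P : ell2 →L[ℂ] ell2 := U ∘L (S ∘L Vad) with hP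
  have hPU : ∀ x : H, P (U x) = U x := by
    intro x
    have : S (T x) = x := congrArg (fun (W : H →L[ℂ] H) => W x) hST
    simpa [hP, hT] using congrArg U this
  have hVP : ∀ y : ell2, Vad (P y) = Vad y := by
    intro y
    have : T (S (Vad y)) = Vad y := congrArg (fun (W : H →L[ℂ] H) => W (Vad y)) hTS
    simpa [hP, hT] using this
  have hidem : ∀ y : ell2, P (P y) = P y := fun y => hPU _
  -- kernel of P is kernel of Vad
  have hkerP : LinearMap.ker (P : ell2 →ₗ[ℂ] ell2) = LinearMap.ker (Vad : ell2 →ₗ[ℂ] H) := by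
    ext y
    simp only [LinearMap.mem_ker, ContinuousLinearMap.coe_coe]
    constructor
    · intro h
      have := hVP y
      rw [h, map_zero] at this
      exact this.symm
    · intro h
      simp [hP, h]
  -- range of P is range of U
  have hranP : LinearMap.range (P : ell2 →ₗ[ℂ] ell2) = LinearMap.range (U : H →ₗ[ℂ] ell2) := by
    apply le_antisymm
    · rintro _ ⟨y, rfl⟩
      exact ⟨S (Vad y), rfl⟩
    · rintro _ ⟨x, rfl⟩
      exact ⟨U x, hPU x⟩
  -- range U with ker P is a complemented pair
  have hcompl1 : IsCompl (LinearMap.range (U : H →ₗ[ℂ] ell2)) (LinearMap.ker (Vad : ell2 →ₗ[ℂ] H)) := by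
    rw [← hranP, ← hkerP]
    constructor
    · rw [disjoint_iff_inf_le]
      rintro y ⟨⟨x, rfl⟩, hy2⟩
      have h0 : P (P x) = 0 := hy2
      rw [hidem] at h0
      simpa [Submodule.mem_bot] using h0
    · rw [codisjoint_iff_le_sup]
      intro y _
      have hy : y = P y + (y - P y) := by abel
      rw [hy]
      exact Submodule.add_mem_sup ⟨y, rfl⟩ (by simp [LinearMap.mem_ker, hidem y])
  -- range U is closed, so it is complemented by its orthogonal, which is ker Uad
  have hclosed : IsClosed (Set.range U) := frame_range_closed f hf U hU
  have hclosed' : IsClosed ((LinearMap.range (U : H →ₗ[ℂ] ell2) : Submodule ℂ ell2) : Set ell2) := by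
    rw [LinearMap.coe_range]
    exact hclosed
  haveI : CompleteSpace (LinearMap.range (U : H →ₗ[ℂ] ell2)) := hclosed'.completeSpace_coe
  have horth : (LinearMap.range (U : H →ₗ[ℂ] ell2))ᗮ = LinearMap.ker (Uad : ell2 →ₗ[ℂ] H) := by
    ext y
    simp only [Submodule.mem_orthogonal, LinearMap.mem_ker, LinearMap.mem_range,
      ContinuousLinearMap.coe_coe]
    constructor
    · intro h
      have h' : ⟪U (Uad y), y⟫_ℂ = 0 := h _ ⟨Uad y, rfl⟩
      have h2 : ⟪Uad y, Uad y⟫_ℂ = 0 := by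
        calc ⟪Uad y, Uad y⟫_ℂ = ⟪y, U (Uad y)⟫_ℂ :=
              ContinuousLinearMap.adjoint_inner_left U (Uad y) y
        _ = starRingEnd ℂ ⟪U (Uad y), y⟫_ℂ := (inner_conj_symm _ _).symm
        _ = 0 := by rw [h']; simp
      exact inner_self_eq_zero.mp h2
    · rintro h z ⟨x, rfl⟩
      rw [← ContinuousLinearMap.adjoint_inner_right U, ← hUad, h, inner_zero_right]
  have hcompl2 : IsCompl (LinearMap.range (U : H →ₗ[ℂ] ell2)) (LinearMap.ker (Uad : ell2 →ₗ[ℂ] H)) := by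
    rw [← horth]
    exact Submodule.isCompl_orthogonal_of_hasOrthogonalProjection
  -- both kernels are isomorphic to the quotient by range U
  let e1 := Submodule.quotientEquivOfIsCompl _ _ hcompl2
  let e2 := Submodule.quotientEquivOfIsCompl _ _ hcompl1
  rw [← LinearEquiv.rank_eq e1, ← LinearEquiv.rank_eq e2]
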